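/- Let α ∈ [0,1], x₀ ∈ ℝ³, R > 0, and x ∈ ℝ³ with |x−x₀| < R. Then ∫_{B_R(x₀)} |x₀−y|^{−α}·|x−y|^{−1} dy = 4πR^{2−α}/(2−α) − 4π|x−x₀|^{2−α}/((3−α)(2−α)). -/

import Mathlib

open MeasureTheory Real


section NPaux
open Set

lemma theta_integral (d r : ℝ) (hd : 0 ≤ d) (hr : 0 < r) (hdr : d ≠ r) :
    ∫ θ in (0:ℝ)..π, Real.sin θ * (Real.sqrt (d^2 + r^2 - 2*d*r*Real.cos θ))⁻¹
      = 2 / max d r := by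
  have hne : d - r ≠ 0 := sub_ne_zero.mpr hdr
  have hpos : ∀ θ : ℝ, 0 < d^2 + r^2 - 2*d*r*Real.cos θ := by
    intro θ
    have h1 : Real.cos θ ≤ 1 := Real.cos_le_one θ
    have h2 : 2*d*r*Real.cos θ ≤ 2*d*r := by
      have : 0 ≤ 2*d*r := by positivity
      nlinarith
    have h3 : (0:ℝ) < (d-r)^2 := by positivity
    nlinarith
  rcases eq_or_lt_of_le hd with h0 | hdpos
  · rw [← h0]
    have : ∀ θ : ℝ, Real.sin θ * (Real.sqrt ((0:ℝ)^2 + r^2 - 2*0*r*Real.cos θ))⁻¹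
        = Real.sin θ * r⁻¹ := by
      intro θ
      have : (0:ℝ)^2 + r^2 - 2*0*r*Real.cos θ = r^2 := by ring
      rw [this, Real.sqrt_sq hr.le]
    simp_rw [this]
    rw [intervalIntegral.integral_mul_const, integral_sin]
    rw [max_eq_right hr.le]
    simp [Real.cos_pi]
    ring
  · -- d > 0
    have hF : ∀ θ ∈ uIcc (0:ℝ) π, HasDerivAt
        (fun θ => (d*r)⁻¹ * Real.sqrt (d^2 + r^2 - 2*d*r*Real.cos θ))
        (Real.sin θ * (Real.sqrt (d^2 + r^2 - 2*d*r*Real.cos θ))⁻¹) θ := by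
      intro θ _
      have hg : HasDerivAt (fun θ : ℝ => d^2 + r^2 - 2*d*r*Real.cos θ)
          (2*d*r*Real.sin θ) θ := by
        exact (((Real.hasDerivAt_cos θ).const_mul (2*d*r)).const_sub (d^2+r^2)).congr_deriv (by ring)
      have hsq := (Real.hasDerivAt_sqrt (ne_of_gt (hpos θ))).comp θ hg
      have := hsq.const_mul ((d*r)⁻¹)
      refine this.congr_deriv ?_
      have hsqrtpos : 0 < Real.sqrt (d^2 + r^2 - 2*d*r*Real.cos θ) :=
        Real.sqrt_pos.mpr (hpos θ)
      field_simp
    have hint : IntervalIntegrable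
        (fun θ => Real.sin θ * (Real.sqrt (d^2 + r^2 - 2*d*r*Real.cos θ))⁻¹) volume 0 π := by
      apply Continuous.intervalIntegrable
      apply Continuous.mul Real.continuous_sin
      apply Continuous.inv₀
      · exact (continuous_const.sub (continuous_const.mul Real.continuous_cos)).sqrt
      · intro θ
        exact ne_of_gt (Real.sqrt_pos.mpr (hpos θ))
    rw [intervalIntegral.integral_eq_sub_of_hasDerivAt hF hint]
    have e1 : d^2 + r^2 - 2*d*r*Real.cos π = (d+r)^2 := by
      rw [Real.cos_pi]; ring
    have e0 : d^2 + r^2 - 2*d*r*Real.cos 0 = (d-r)^2 := by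
      rw [Real.cos_zero]; ring
    rw [e1, e0, Real.sqrt_sq_eq_abs, Real.sqrt_sq_eq_abs,
      abs_of_pos (by positivity : (0:ℝ) < d + r)]
    rcases lt_or_gt_of_ne hdr with h | h
    · rw [abs_of_neg (by linarith : d - r < 0), max_eq_right h.le]
      field_simp
      ring
    · rw [abs_of_pos (by linarith : 0 < d - r), max_eq_left h.le]
      field_simp
      ring


lemma lintegral_comp_polarCoord_symm' (f : ℝ × ℝ → ENNReal) :
    ∫⁻ p in polarCoord.target, ENNReal.ofReal p.1 * f (polarCoord.symm p) = ∫⁻ p, f p := by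
  exact _root_.lintegral_comp_polarCoord_symm f


noncomputable def myF2 (α d R : ℝ) (q : ℝ × ℝ) : ENNReal :=
  if q.1^2 + q.2^2 < R^2 then
    ENNReal.ofReal ((Real.sqrt (q.1^2+q.2^2)) ^ (-α) * (Real.sqrt ((q.1-d)^2+q.2^2))⁻¹) else 0

noncomputable def myF3 (α d R : ℝ) (p : ℝ × ℝ × ℝ) : ENNReal :=
  myF2 α d R (p.1, Real.sqrt (p.2.1^2 + p.2.2^2))

noncomputable def myG (α d R : ℝ) (q : ℝ × ℝ) : ENNReal :=
  if 0 < q.2 then ENNReal.ofReal q.2 * myF2 α d R q else 0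

lemma myF2_measurable (α d R : ℝ) : Measurable (myF2 α d R) := by
  unfold myF2
  refine Measurable.ite ?_ ?_ measurable_const
  · exact measurableSet_lt (by fun_prop) measurable_const
  · apply ENNReal.measurable_ofReal.comp
    apply Measurable.mul
    · exact (((continuous_fst.pow 2).add (continuous_snd.pow 2)).sqrt).measurable.pow measurable_const
    · exact ((((continuous_fst.sub continuous_const).pow 2).add
        (continuous_snd.pow 2)).sqrt).measurable.inv

lemma myF3_measurable (α d R : ℝ) : Measurable (myF3 α d R) := by
  unfold myF3
  exact (myF2_measurable α d R).comp (measurable_fst.prodMk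
    (((continuous_fst.comp continuous_snd).pow 2).add
      ((continuous_snd.comp continuous_snd).pow 2)).sqrt.measurable)

lemma myG_measurable (α d R : ℝ) : Measurable (myG α d R) := by
  unfold myG
  refine Measurable.ite (measurableSet_lt measurable_const measurable_snd) ?_ measurable_const
  exact (ENNReal.measurable_ofReal.comp measurable_snd).mul (myF2_measurable α d R)


noncomputable def T3 : EuclideanSpace ℝ (Fin 3) ≃ᵐ ℝ × ℝ × ℝ :=
  (MeasurableEquiv.toLp 2 (Fin 3 → ℝ)).symm.trans
    ((MeasurableEquiv.piFinSuccAbove (fun _ : Fin 3 => ℝ) 0).trans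
      ((MeasurableEquiv.refl ℝ).prodCongr (MeasurableEquiv.finTwoArrow)))

lemma T3_measurePreserving : MeasurePreserving T3 volume volume := by
  have h1 := EuclideanSpace.volume_preserving_symm_measurableEquiv_toLp (Fin 3)
  have h2 := volume_preserving_piFinSuccAbove (fun _ : Fin 3 => ℝ) 0
  have h3 := (MeasurePreserving.id (volume : Measure ℝ)).prod
    (volume_preserving_finTwoArrow ℝ)
  exact (h3.comp h2).comp h1

lemma T3_symm_apply (p : ℝ × ℝ × ℝ) (i : Fin 3) :
    (T3.symm p : EuclideanSpace ℝ (Fin 3)) i = ![p.1, p.2.1, p.2.2] i := by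
  fin_cases i <;> simp [T3] <;> rfl

lemma T3_symm_norm (p : ℝ × ℝ × ℝ) :
    ‖(T3.symm p : EuclideanSpace ℝ (Fin 3))‖
      = Real.sqrt (p.1^2 + (p.2.1^2 + p.2.2^2)) := by
  rw [EuclideanSpace.norm_eq, Fin.sum_univ_three,
    T3_symm_apply p 0, T3_symm_apply p 1, T3_symm_apply p 2]
  simp only [Matrix.cons_val_zero, Matrix.cons_val_one, Matrix.head_cons,
    Matrix.cons_val_two, Matrix.tail_cons, Real.norm_eq_abs, sq_abs]
  congr 1
  ring

lemma T3_symm_sub_norm (q p : ℝ × ℝ × ℝ) :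
    ‖(T3.symm q - T3.symm p : EuclideanSpace ℝ (Fin 3))‖
      = Real.sqrt ((q.1-p.1)^2 + ((q.2.1-p.2.1)^2 + (q.2.2-p.2.2)^2)) := by
  rw [EuclideanSpace.norm_eq, Fin.sum_univ_three]
  simp only [PiLp.sub_apply, T3_symm_apply, Matrix.cons_val_zero, Matrix.cons_val_one,
    Matrix.head_cons, Matrix.cons_val_two, Matrix.tail_cons, Real.norm_eq_abs, sq_abs]
  congr 1
  ring






lemma step_inner (α d R : ℝ) (a : ℝ) :
    ∫⁻ q : ℝ × ℝ, myF3 α d R (a, q) =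
      ENNReal.ofReal (2*π) * ∫⁻ s in Ioi (0:ℝ), ENNReal.ofReal s * myF2 α d R (a, s) := by
  rw [← lintegral_comp_polarCoord_symm' (fun z => myF3 α d R (a, z))]
  have h1 : ∀ᵐ p ∂volume, p ∈ polarCoord.target →
      ENNReal.ofReal p.1 * myF3 α d R (a, polarCoord.symm p)
        = ENNReal.ofReal p.1 * myF2 α d R (a, p.1) := by
    filter_upwards with p hp
    have hp1 : (0:ℝ) < p.1 := hp.1
    congr 1
    unfold myF3
    have h2 : (p.1 * Real.cos p.2)^2 + (p.1 * Real.sin p.2)^2 = p.1^2 := by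
      have h := Real.sin_sq_add_cos_sq p.2
      linear_combination p.1^2 * h
    simp only [polarCoord_symm_apply]
    rw [h2, Real.sqrt_sq hp1.le]
  rw [setLIntegral_congr_fun_ae polarCoord.open_target.measurableSet h1]
  rw [polarCoord_target, Measure.volume_eq_prod, ← Measure.prod_restrict]
  have hmeas : AEMeasurable (fun q : ℝ × ℝ => ENNReal.ofReal q.1 * myF2 α d R (a, q.1))
      ((volume.restrict (Ioi 0)).prod (volume.restrict (Ioo (-π) π))) := by
    refine Measurable.aemeasurable ?_
    exact (ENNReal.measurable_ofReal.comp measurable_fst).mul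
      ((myF2_measurable α d R).comp (measurable_const.prodMk measurable_fst))
  rw [lintegral_prod _ hmeas]
  simp only [lintegral_const, Measure.restrict_apply_univ, Real.volume_Ioo]
  have : π - -π = 2*π := by ring
  rw [this]
  rw [lintegral_mul_const' _ _ ENNReal.ofReal_ne_top, mul_comm]





lemma step_J (α d R : ℝ) (hR : 0 < R) (hd : 0 ≤ d) {r : ℝ} (hr : 0 < r) (hdr : d ≠ r) :
    ∫⁻ θ in Ioo (-π) π, ENNReal.ofReal r * myG α d R (r * Real.cos θ, r * Real.sin θ)
      = if r < R then ENNReal.ofReal (r * r * r ^ (-α)) * ENNReal.ofReal (2 / max d r)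
        else 0 := by
  have habs : ∀ θ : ℝ, (r * Real.cos θ)^2 + (r * Real.sin θ)^2 = r^2 := by
    intro θ; linear_combination r^2 * (Real.sin_sq_add_cos_sq θ)
  have hker : ∀ θ : ℝ, (r * Real.cos θ - d)^2 + (r * Real.sin θ)^2
      = d^2 + r^2 - 2*d*r*Real.cos θ := by
    intro θ; linear_combination r^2 * (Real.sin_sq_add_cos_sq θ)
  have hcond : r^2 < R^2 ↔ r < R := by
    constructor <;> intro h <;> nlinarith
  -- rewrite to indicator form
  have h1 : ∀ᵐ θ ∂volume, θ ∈ Ioo (-π) π →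
      ENNReal.ofReal r * myG α d R (r * Real.cos θ, r * Real.sin θ)
        = (Ioo (0:ℝ) π).indicator (fun θ =>
            ENNReal.ofReal r * (ENNReal.ofReal (r * Real.sin θ) *
              myF2 α d R (r * Real.cos θ, r * Real.sin θ))) θ := by
    filter_upwards with θ hθ
    by_cases hm : θ ∈ Ioo (0:ℝ) π
    · rw [indicator_of_mem hm]
      have hs : 0 < Real.sin θ := Real.sin_pos_of_pos_of_lt_pi hm.1 hm.2
      have : 0 < r * Real.sin θ := by positivity
      rw [myG, if_pos this]
    · rw [indicator_of_notMem hm]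
      have hθ0 : θ ≤ 0 := by
        by_contra h
        push_neg at h
        exact hm ⟨h, hθ.2⟩
      have hs : Real.sin θ ≤ 0 := Real.sin_nonpos_of_nonpos_of_neg_pi_le hθ0 hθ.1.le
      have : ¬ 0 < r * Real.sin θ := by
        push_neg
        exact mul_nonpos_of_nonneg_of_nonpos hr.le hs
      rw [myG, if_neg this, mul_zero]
  rw [setLIntegral_congr_fun_ae measurableSet_Ioo h1, lintegral_indicator measurableSet_Ioo,
    Measure.restrict_restrict measurableSet_Ioo,
    show Ioo (0:ℝ) π ∩ Ioo (-π) π = Ioo (0:ℝ) π from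
      inter_eq_left.mpr (Ioo_subset_Ioo (by linarith [Real.pi_pos]) le_rfl)]
  by_cases hrR : r < R
  · rw [if_pos hrR]
    have h2 : ∀ᵐ θ ∂volume, θ ∈ Ioo (0:ℝ) π →
        ENNReal.ofReal r * (ENNReal.ofReal (r * Real.sin θ) *
          myF2 α d R (r * Real.cos θ, r * Real.sin θ))
          = (ENNReal.ofReal (r * r * r ^ (-α))) *
            ENNReal.ofReal (Real.sin θ *
              (Real.sqrt (d^2 + r^2 - 2*d*r*Real.cos θ))⁻¹) := by
      filter_upwards with θ hθ
      have hs : 0 ≤ Real.sin θ := Real.sin_nonneg_of_nonneg_of_le_pi hθ.1.le hθ.2.le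
      rw [myF2]
      simp only [habs, hker]
      rw [if_pos (hcond.mpr hrR), Real.sqrt_sq hr.le]
      rw [ENNReal.ofReal_mul hr.le, ENNReal.ofReal_mul (by positivity : (0:ℝ) ≤ r * r),
        ENNReal.ofReal_mul hr.le, ENNReal.ofReal_mul (by positivity : (0:ℝ) ≤ r ^ (-α)),
        ENNReal.ofReal_mul hs]
      ring
    rw [setLIntegral_congr_fun_ae measurableSet_Ioo h2,
      lintegral_const_mul' _ _ ENNReal.ofReal_ne_top]
    congr 1
    have hcont : Continuous fun θ : ℝ =>
        Real.sin θ * (Real.sqrt (d^2 + r^2 - 2*d*r*Real.cos θ))⁻¹ := by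
      apply Real.continuous_sin.mul
      apply Continuous.inv₀
      · exact (continuous_const.sub (continuous_const.mul Real.continuous_cos)).sqrt
      · intro θ
        refine ne_of_gt (Real.sqrt_pos.mpr ?_)
        have h1 : Real.cos θ ≤ 1 := Real.cos_le_one θ
        have h2 : 2*d*r*Real.cos θ ≤ 2*d*r := by
          have : 0 ≤ 2*d*r := by positivity
          nlinarith
        have hne : d - r ≠ 0 := sub_ne_zero.mpr hdr
        have h3 : (0:ℝ) < (d-r)^2 := by positivity
        nlinarith
    have hint : IntegrableOn (fun θ : ℝ =>
        Real.sin θ * (Real.sqrt (d^2 + r^2 - 2*d*r*Real.cos θ))⁻¹) (Ioo 0 π) volume :=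
      (hcont.integrableOn_Icc).mono_set Ioo_subset_Icc_self
    have hnn : 0 ≤ᵐ[volume.restrict (Ioo (0:ℝ) π)] fun θ : ℝ =>
        Real.sin θ * (Real.sqrt (d^2 + r^2 - 2*d*r*Real.cos θ))⁻¹ := by
      filter_upwards [ae_restrict_mem measurableSet_Ioo] with θ hθ
      have hs : 0 ≤ Real.sin θ := Real.sin_nonneg_of_nonneg_of_le_pi hθ.1.le hθ.2.le
      positivity
    rw [← ofReal_integral_eq_lintegral_ofReal hint hnn,
      ← integral_Ioc_eq_integral_Ioo, ← intervalIntegral.integral_of_le Real.pi_pos.le,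
      theta_integral d r hd hr hdr]
  · rw [if_neg hrR]
    have h2 : ∀ᵐ θ ∂volume, θ ∈ Ioo (0:ℝ) π →
        ENNReal.ofReal r * (ENNReal.ofReal (r * Real.sin θ) *
          myF2 α d R (r * Real.cos θ, r * Real.sin θ)) = 0 := by
      filter_upwards with θ hθ
      rw [myF2]
      simp only [habs, hker]
      rw [if_neg (fun h => hrR (hcond.mp h))]
      simp
    rw [setLIntegral_congr_fun_ae measurableSet_Ioo h2, lintegral_zero]


lemma rrr (α : ℝ) {r : ℝ} (hr : 0 < r) : r * r * r ^ (-α) = r ^ (2-α) := by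
  rw [show (2:ℝ)-α = 1 + (1 + -α) by ring, Real.rpow_add hr, Real.rpow_add hr, Real.rpow_one]
  ring

lemma step_r (α d R : ℝ) (hα0 : 0 ≤ α) (hα1 : α ≤ 1) (hR : 0 < R) (hd0 : 0 ≤ d)
    (hdR : d < R) :
    (∫⁻ r in Ioi (0:ℝ), if r < R then
        ENNReal.ofReal (r * r * r ^ (-α)) * ENNReal.ofReal (2 / max d r) else 0)
      = ENNReal.ofReal (2*d^(2-α)/(3-α)) + ENNReal.ofReal (2*(R^(2-α) - d^(2-α))/(2-α)) := by
  have h3α : (0:ℝ) < 3 - α := by linarith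
  have h2α : (0:ℝ) < 2 - α := by linarith
  have hind : (fun r : ℝ => if r < R then
      ENNReal.ofReal (r * r * r ^ (-α)) * ENNReal.ofReal (2 / max d r) else 0)
      = (Iio R).indicator (fun r =>
        ENNReal.ofReal (r * r * r ^ (-α)) * ENNReal.ofReal (2 / max d r)) := by
    funext r
    rw [indicator_apply]
    rfl
  rw [hind, lintegral_indicator measurableSet_Iio,
    Measure.restrict_restrict measurableSet_Iio, Iio_inter_Ioi,
    ← Ioc_union_Ioo_eq_Ioo hd0 hdR,
    lintegral_union measurableSet_Ioo (by
      refine Set.disjoint_left.mpr fun x hx hx' => absurd hx.2 (not_le.mpr hx'.1))]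
  congr 1
  · -- piece on Ioc 0 d
    rcases eq_or_lt_of_le hd0 with h0 | hdpos
    · rw [← h0]
      simp [Real.zero_rpow (ne_of_gt h2α)]
    · have h2 : ∀ᵐ r ∂volume, r ∈ Ioc (0:ℝ) d →
          ENNReal.ofReal (r * r * r ^ (-α)) * ENNReal.ofReal (2 / max d r)
            = ENNReal.ofReal (r ^ (2-α) * (2/d)) := by
        filter_upwards with r hrm
        have hrpos := hrm.1
        rw [max_eq_left hrm.2, rrr α hrm.1, ENNReal.ofReal_mul (by positivity)]
      rw [setLIntegral_congr_fun_ae measurableSet_Ioc h2]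
      have hint : IntegrableOn (fun r : ℝ => r ^ (2-α) * (2/d)) (Ioc 0 d) volume :=
        ((intervalIntegral.intervalIntegrable_rpow' (by linarith : (-1:ℝ) < 2-α)).mul_const
          (2/d)).1
      have hnn : 0 ≤ᵐ[volume.restrict (Ioc (0:ℝ) d)] fun r : ℝ => r ^ (2-α) * (2/d) := by
        filter_upwards [ae_restrict_mem measurableSet_Ioc] with r hrm
        have := hrm.1
        positivity
      rw [← ofReal_integral_eq_lintegral_ofReal hint hnn,
        ← intervalIntegral.integral_of_le hd0, intervalIntegral.integral_mul_const,
        integral_rpow (Or.inl (by linarith : (-1:ℝ) < 2-α))]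
      congr 1
      rw [Real.zero_rpow (by positivity : (2-α)+1 ≠ 0),
        show (2-α)+1 = 1 + (2-α) by ring, Real.rpow_add hdpos, Real.rpow_one]
      field_simp
      ring
  · -- piece on Ioo d R
    have h2 : ∀ᵐ r ∂volume, r ∈ Ioo d R →
        ENNReal.ofReal (r * r * r ^ (-α)) * ENNReal.ofReal (2 / max d r)
          = ENNReal.ofReal (r ^ (1-α) * 2) := by
      filter_upwards with r hrm
      have hrpos : 0 < r := lt_of_le_of_lt hd0 hrm.1
      rw [max_eq_right hrm.1.le, rrr α hrpos, ← ENNReal.ofReal_mul (by positivity)]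
      congr 1
      rw [show (2:ℝ)-α = 1 + (1-α) by ring, Real.rpow_add hrpos, Real.rpow_one]
      field_simp
    rw [setLIntegral_congr_fun_ae measurableSet_Ioo h2]
    have hint : IntegrableOn (fun r : ℝ => r ^ (1-α) * 2) (Ioo d R) volume :=
      (((intervalIntegral.intervalIntegrable_rpow' (by linarith : (-1:ℝ) < 1-α)).mul_const
        2).1).mono_set Ioo_subset_Ioc_self
    have hnn : 0 ≤ᵐ[volume.restrict (Ioo d R)] fun r : ℝ => r ^ (1-α) * 2 := by
      filter_upwards [ae_restrict_mem measurableSet_Ioo] with r hrm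
      have hrpos : 0 < r := lt_of_le_of_lt hd0 hrm.1
      positivity
    rw [← ofReal_integral_eq_lintegral_ofReal hint hnn, ← integral_Ioc_eq_integral_Ioo,
      ← intervalIntegral.integral_of_le hdR.le, intervalIntegral.integral_mul_const,
      integral_rpow (Or.inl (by linarith : (-1:ℝ) < 1-α))]
    congr 1
    rw [show (1-α)+1 = 2-α by ring]
    ring






lemma key (α d R : ℝ) (hα0 : 0 ≤ α) (hα1 : α ≤ 1) (hR : 0 < R) (hd0 : 0 ≤ d)
    (hdR : d < R) :
    ∫⁻ p : ℝ × ℝ × ℝ, myF3 α d R p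
      = ENNReal.ofReal (4*π*R^(2-α)/(2-α) - 4*π*d^(2-α)/((3-α)*(2-α))) := by
  have h3α : (0:ℝ) < 3 - α := by linarith
  have h2α : (0:ℝ) < 2 - α := by linarith
  rw [Measure.volume_eq_prod, lintegral_prod _ (myF3_measurable α d R).aemeasurable]
  simp_rw [step_inner α d R]
  rw [lintegral_const_mul' _ _ ENNReal.ofReal_ne_top]
  have hG : ∀ a : ℝ, (∫⁻ s in Ioi (0:ℝ), ENNReal.ofReal s * myF2 α d R (a, s))
      = ∫⁻ s, myG α d R (a, s) := by
    intro a
    rw [← lintegral_indicator measurableSet_Ioi]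
    refine lintegral_congr fun s => ?_
    rw [indicator_apply]
    simp only [mem_Ioi, myG]
  simp_rw [hG]
  rw [← lintegral_prod _ ((myG_measurable α d R).aemeasurable), ← Measure.volume_eq_prod,
    ← lintegral_comp_polarCoord_symm' (myG α d R), polarCoord_target, Measure.volume_eq_prod,
    ← Measure.prod_restrict, lintegral_prod _ (by
      refine Measurable.aemeasurable ?_
      exact (ENNReal.measurable_ofReal.comp measurable_fst).mul
        ((myG_measurable α d R).comp
          ((measurable_fst.mul (Real.measurable_cos.comp measurable_snd)).prodMk
            (measurable_fst.mul (Real.measurable_sin.comp measurable_snd)))))]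
  have hae : ∀ᵐ r ∂(volume.restrict (Ioi (0:ℝ))),
      (∫⁻ θ in Ioo (-π) π, ENNReal.ofReal ((r, θ).1) *
          myG α d R (polarCoord.symm (r, θ)))
        = if r < R then ENNReal.ofReal (r * r * r ^ (-α)) * ENNReal.ofReal (2 / max d r)
          else 0 := by
    have h1 : ∀ᵐ r ∂(volume.restrict (Ioi (0:ℝ))), r ≠ d := by
      refine ae_restrict_of_ae ?_
      have : {r : ℝ | ¬ r ≠ d} = {d} := by ext r; simp
      rw [ae_iff, this]
      exact Real.volume_singleton
    filter_upwards [h1, ae_restrict_mem measurableSet_Ioi] with r hrd hr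
    have := step_J α d R hR hd0 (mem_Ioi.mp hr) (Ne.symm hrd)
    simp only [polarCoord_symm_apply]
    exact this
  rw [lintegral_congr_ae hae, step_r α d R hα0 hα1 hR hd0 hdR]
  have hnn1 : (0:ℝ) ≤ 2*d^(2-α)/(3-α) := by positivity
  have hnn2 : (0:ℝ) ≤ 2*(R^(2-α) - d^(2-α))/(2-α) := by
    have : d^(2-α) ≤ R^(2-α) := Real.rpow_le_rpow hd0 hdR.le h2α.le
    have h := sub_nonneg.mpr this
    positivity
  rw [← ENNReal.ofReal_add hnn1 hnn2, ← ENNReal.ofReal_mul (by positivity : (0:ℝ) ≤ 2*π)]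
  congr 1
  field_simp
  ring






/-- Newtonian-potential computation inside the ball: for `α ∈ [0,1]`, `R > 0` and
`|x-x₀| < R`,
`∫_{B_R(x₀)} |x₀-y|^(-α) |x-y|⁻¹ dy = 4πR^(2-α)/(2-α) - 4π|x-x₀|^(2-α)/((3-α)(2-α))`. -/
theorem integral_ball_rpow_inv_dist_lt (α : ℝ) (hα0 : 0 ≤ α) (hα1 : α ≤ 1)
    (x₀ x : EuclideanSpace ℝ (Fin 3)) (R : ℝ) (hR : 0 < R) (hx : ‖x - x₀‖ < R) :
    ∫ y in Metric.ball x₀ R, ‖x₀ - y‖ ^ (-α) * ‖x - y‖ ^ (-1 : ℝ) =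
      4 * π * R ^ (2 - α) / (2 - α) -
        4 * π * ‖x - x₀‖ ^ (2 - α) / ((3 - α) * (2 - α)) := by
  have h3α : (0:ℝ) < 3 - α := by linarith
  have h2α : (0:ℝ) < 2 - α := by linarith
  set d : ℝ := ‖x - x₀‖ with hd
  have hd0 : 0 ≤ d := norm_nonneg _
  set w : EuclideanSpace ℝ (Fin 3) := T3.symm (d, 0, 0) with hw
  have hwnorm : ‖w‖ = d := by
    rw [hw, T3_symm_norm]
    simp only []
    rw [show d^2 + ((0:ℝ)^2 + (0:ℝ)^2) = d^2 by ring, Real.sqrt_sq hd0]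
  -- Step 1: translation
  have step1 : (∫ y in Metric.ball x₀ R, ‖x₀ - y‖ ^ (-α) * ‖x - y‖ ^ (-1 : ℝ))
      = ∫ z in Metric.ball (0 : EuclideanSpace ℝ (Fin 3)) R,
          ‖z‖ ^ (-α) * ‖(x - x₀) - z‖ ^ (-1:ℝ) := by
    have hmp : MeasurePreserving (fun z : EuclideanSpace ℝ (Fin 3) => x₀ + z)
        volume volume := measurePreserving_add_left volume x₀
    have hemb : MeasurableEmbedding (fun z : EuclideanSpace ℝ (Fin 3) => x₀ + z) :=
      (Homeomorph.addLeft x₀).measurableEmbedding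
    rw [← hmp.setIntegral_preimage_emb hemb]
    have hpre : (fun z : EuclideanSpace ℝ (Fin 3) => x₀ + z) ⁻¹' Metric.ball x₀ R
        = Metric.ball 0 R := by
      ext z
      simp [Metric.mem_ball, dist_eq_norm]
    rw [hpre]
    refine setIntegral_congr_fun measurableSet_ball fun z _ => ?_
    rw [show x₀ - (x₀ + z) = -z by abel, norm_neg,
      show x - (x₀ + z) = (x - x₀) - z by abel]
  -- Step 2: reflection
  have hvw : ‖x - x₀‖ = ‖w‖ := by rw [hwnorm]
  set L : EuclideanSpace ℝ (Fin 3) ≃ₗᵢ[ℝ] EuclideanSpace ℝ (Fin 3) :=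
    Submodule.reflection (ℝ ∙ ((x - x₀) - w))ᗮ with hL
  have hLvw : L (x - x₀) = w := Submodule.reflection_sub hvw
  have hLsymm : L.symm (x - x₀) = w := by
    rw [hL, Submodule.reflection_symm]
    exact hLvw
  have step2 : (∫ z in Metric.ball (0 : EuclideanSpace ℝ (Fin 3)) R,
        ‖z‖ ^ (-α) * ‖(x - x₀) - z‖ ^ (-1:ℝ))
      = ∫ z in Metric.ball (0 : EuclideanSpace ℝ (Fin 3)) R,
          ‖z‖ ^ (-α) * ‖w - z‖ ^ (-1:ℝ) := by
    have hmp : MeasurePreserving (L : EuclideanSpace ℝ (Fin 3) → EuclideanSpace ℝ (Fin 3))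
        volume volume := L.measurePreserving
    have hemb : MeasurableEmbedding
        (L : EuclideanSpace ℝ (Fin 3) → EuclideanSpace ℝ (Fin 3)) :=
      L.toHomeomorph.measurableEmbedding
    rw [← hmp.setIntegral_preimage_emb hemb]
    have hpre : (L : EuclideanSpace ℝ (Fin 3) → EuclideanSpace ℝ (Fin 3)) ⁻¹'
        Metric.ball 0 R = Metric.ball 0 R := by
      ext z
      simp only [mem_preimage, Metric.mem_ball, dist_zero_right]
      rw [L.norm_map]
    rw [hpre]
    refine setIntegral_congr_fun measurableSet_ball fun z _ => ?_
    rw [L.norm_map]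
    congr 2
    calc ‖(x - x₀) - L z‖ = ‖L.symm ((x - x₀) - L z)‖ := (L.symm.norm_map _).symm
      _ = ‖L.symm (x - x₀) - z‖ := by rw [map_sub, L.symm_apply_apply]
      _ = ‖w - z‖ := by rw [hLsymm]
  rw [step1, step2]
  -- Step 3: to lintegral
  have hmeaswz : Measurable fun z : EuclideanSpace ℝ (Fin 3) =>
      ‖z‖ ^ (-α) * ‖w - z‖ ^ (-1:ℝ) :=
    (continuous_norm.measurable.pow measurable_const).mul
      (((continuous_const.sub continuous_id).norm.measurable).pow measurable_const)
  rw [integral_eq_lintegral_of_nonneg_ae (ae_of_all _ fun z => by positivity)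
    hmeaswz.aestronglyMeasurable]
  -- Step 4: to coordinates
  have hlin : (∫⁻ z in Metric.ball (0 : EuclideanSpace ℝ (Fin 3)) R,
        ENNReal.ofReal (‖z‖ ^ (-α) * ‖w - z‖ ^ (-1:ℝ)))
      = ∫⁻ p : ℝ × ℝ × ℝ, myF3 α d R p := by
    classical
    rw [← lintegral_indicator measurableSet_ball,
      ← (T3_measurePreserving.symm).lintegral_comp_emb T3.symm.measurableEmbedding]
    refine lintegral_congr fun p => ?_
    rw [indicator_apply]
    have hb : (T3.symm p : EuclideanSpace ℝ (Fin 3)) ∈ Metric.ball 0 R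
        ↔ p.1^2 + ((Real.sqrt (p.2.1^2 + p.2.2^2))^2) < R^2 := by
      rw [mem_ball_zero_iff, T3_symm_norm, Real.sq_sqrt (by positivity),
        Real.sqrt_lt' hR]
    rw [myF3, myF2]
    simp only [Real.sq_sqrt (show (0:ℝ) ≤ p.2.1^2 + p.2.2^2 by positivity)]
    by_cases hmem : (T3.symm p : EuclideanSpace ℝ (Fin 3)) ∈ Metric.ball 0 R
    · rw [if_pos hmem, if_pos (by
        have := hb.mp hmem
        rwa [Real.sq_sqrt (show (0:ℝ) ≤ p.2.1^2 + p.2.2^2 by positivity)] at this)]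
      have hwsub : ‖w - T3.symm p‖ = Real.sqrt ((p.1-d)^2 + (p.2.1^2+p.2.2^2)) := by
        rw [hw, T3_symm_sub_norm]
        congr 1
        norm_num
        ring
      rw [T3_symm_norm, Real.rpow_neg_one, hwsub]
    · rw [if_neg hmem, if_neg (by
        intro h
        apply hmem
        rw [hb, Real.sq_sqrt (show (0:ℝ) ≤ p.2.1^2 + p.2.2^2 by positivity)]
        exact h)]
  rw [hlin, key α d R hα0 hα1 hR hd0 hx]
  have hle : d^(2-α) ≤ R^(2-α) := Real.rpow_le_rpow hd0 hx.le h2α.le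
  have hπ := Real.pi_pos
  have hB0 : (0:ℝ) ≤ d^(2-α) := Real.rpow_nonneg hd0 _
  have hRHS : (0:ℝ) ≤ 4*π*R^(2-α)/(2-α) - 4*π*d^(2-α)/((3-α)*(2-α)) := by
    have h1 : 4*π*d^(2-α)/((3-α)*(2-α)) ≤ 4*π*R^(2-α)/(2-α) := by
      calc 4*π*d^(2-α)/((3-α)*(2-α)) ≤ 4*π*R^(2-α)/((3-α)*(2-α)) := by gcongr
        _ ≤ 4*π*R^(2-α)/(2-α) := by
          apply div_le_div_of_nonneg_left (by positivity) h2α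
          nlinarith [h2α, h3α]
    linarith
  rw [ENNReal.toReal_ofReal hRHS]

end NPaux
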